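/- arXiv:math-ph/0605034 — 6 statements merged into one kernel-verified Lean document; each statement's English description precedes it below -/
import Mathlib

section
/- For complex numbers z = x + iy and w = u + iv with x, u ≥ 0, setting a = (y − v)² + x² + u² and b = −2xu and w* = −u + iv, we have 2(a + √(a² − b²)) = (|z − w| + |z − w*|)². -/
open Complex

theorem sum_dist_sq_identity (x y u v : ℝ) (hx : 0 ≤ x) (hu : 0 ≤ u) :
    let z : ℂ := ⟨x, y⟩
    let w : ℂ := ⟨u, v⟩
    let wstar : ℂ := ⟨-u, v⟩
    let a : ℝ := (y - v) ^ 2 + x ^ 2 + u ^ 2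
    let b : ℝ := -2 * x * u
    2 * (a + Real.sqrt (a ^ 2 - b ^ 2))
      = (‖z - w‖ + ‖z - wstar‖) ^ 2 := by
  intro z w wstar a b
  have h1 : ‖z - w‖ ^ 2 = (x - u) ^ 2 + (y - v) ^ 2 := by
    rw [Complex.sq_norm]
    simp [Complex.normSq_apply, z, w]
    ring
  have h2 : ‖z - wstar‖ ^ 2 = (x + u) ^ 2 + (y - v) ^ 2 := by
    rw [Complex.sq_norm]
    simp [Complex.normSq_apply, z, wstar]
    ring
  have hs : Real.sqrt (a ^ 2 - b ^ 2)
      = ‖z - w‖ * ‖z - wstar‖ := by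
    have hab : (‖z - w‖ * ‖z - wstar‖) ^ 2
        = a ^ 2 - b ^ 2 := by
      rw [mul_pow, h1, h2]
      simp only [a, b]
      ring
    rw [← hab, Real.sqrt_sq (by positivity)]
  have h2a : 2 * a = ‖z - w‖ ^ 2 + ‖z - wstar‖ ^ 2 := by
    rw [h1, h2]; simp only [a]; ring
  rw [hs]
  nlinarith [h2a]
end

section
/- For z, w in the right half-plane H⁺ = {z ∈ ℂ : Re z ≥ 0}, the averaged logarithmic kernel K(z,w) := (1/(2π)) ∫₀^{2π} log(1/|σ_t(z) − w|) dt, where σ_t rotates (x,y,0) about the y-axis by angle t (so |σ_t(z) − w|² = x² + u² + (y−v)² − 2xu cos t with z = x+iy, w = u+iv), satisfies K(z,w) = log(2/(|z − w| + |z − w*|)), with w* = −conj(w), whenever (z,w) is not a pair of equal points on the imaginary axis. -/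
open Real Complex intervalIntegral
open MeasureTheory Set Metric

lemma il_log {b : ℝ} (hb : 0 < b) : IntervalIntegrable Real.log volume 0 b := by
  have base : IntervalIntegrable Real.log volume 0 1 := by
    have h : IntegrableOn (fun x => -Real.log x) (Set.Ioc (0:ℝ) 1) := by
      apply intervalIntegral.integrableOn_deriv_of_nonneg
        (g := fun x : ℝ => x - x * Real.log x)
      · exact (continuous_id.sub Real.continuous_mul_log).continuousOn
      · intro x hx
        have h1 : HasDerivAt (fun x : ℝ => x * Real.log x) (Real.log x + 1) x := by
          have := (hasDerivAt_id' x).mul (Real.hasDerivAt_log hx.1.ne')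
          exact this.congr_deriv (by rw [mul_inv_cancel₀ hx.1.ne']; ring)
        exact ((hasDerivAt_id' x).sub h1).congr_deriv (by ring)
      · intro x hx
        simpa using Real.log_nonpos hx.1.le hx.2.le
    have h2 : IntegrableOn Real.log (Set.Ioc (0:ℝ) 1) := integrable_neg_iff.mp h
    rw [intervalIntegrable_iff_integrableOn_Ioc_of_le zero_le_one]
    exact h2
  rcases le_or_gt b 1 with hb1 | hb1
  · apply base.mono_set
    rw [Set.uIcc_of_le hb.le, Set.uIcc_of_le zero_le_one]
    exact Set.Icc_subset_Icc le_rfl hb1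
  · refine base.trans ?_
    apply ContinuousOn.intervalIntegrable
    apply Real.continuousOn_log.mono
    intro x hx
    simp only [Set.mem_uIcc] at hx
    simp only [Set.mem_compl_iff, Set.mem_singleton_iff]
    rcases hx with ⟨h1, _⟩ | ⟨h1, _⟩ <;> nlinarith

lemma il_logsin_half : IntervalIntegrable (fun t => Real.log (Real.sin t)) volume 0 (π/2) := by
  have hg : IntervalIntegrable (fun t => |Real.log t| + 2) volume 0 (π/2) :=
    ((il_log (by positivity)).abs.add (intervalIntegrable_const))
  refine hg.mono_fun ?_ ?_
  · exact ((Real.measurable_log.comp Real.measurable_sin).aestronglyMeasurable)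
  · rw [Set.uIoc_of_le (by positivity)]
    refine (MeasureTheory.ae_restrict_mem measurableSet_Ioc).mono ?_
    intro t ht
    have h0 : 0 < t := ht.1
    have hs : 0 < Real.sin t :=
      Real.sin_pos_of_pos_of_lt_pi h0 (lt_of_le_of_lt ht.2 (by linarith [Real.pi_pos]))
    have hub : Real.sin t ≤ t := Real.sin_le h0.le
    have hlb : 2 / π * t ≤ Real.sin t := Real.mul_le_sin h0.le ht.2
    have h2 : Real.log (Real.sin t) ≤ Real.log t := Real.log_le_log hs hub
    have h3 : Real.log t - 2 ≤ Real.log (Real.sin t) := by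
      have hll := Real.log_le_log (by positivity : (0:ℝ) < 2/π*t) hlb
      rw [Real.log_mul (by positivity) h0.ne'] at hll
      have hπ : -2 ≤ Real.log (2/π) := by
        have he : Real.exp (-2) ≤ 2/π := by
          have h1 : Real.exp (-2) ≤ 1/2 := by
            rw [Real.exp_neg, inv_le_comm₀ (Real.exp_pos _) (by norm_num)]
            nlinarith [Real.add_one_le_exp (2:ℝ)]
          have h2 : (1:ℝ)/2 ≤ 2/π := by
            rw [div_le_div_iff₀ two_pos Real.pi_pos]
            linarith [Real.pi_le_four]
          linarith
        calc -2 = Real.log (Real.exp (-2)) := (Real.log_exp _).symm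
        _ ≤ Real.log (2/π) := Real.log_le_log (Real.exp_pos _) he
      linarith
    have habs : |Real.log (Real.sin t)| ≤ |Real.log t| + 2 := by
      rw [abs_le]
      constructor
      · have := neg_abs_le (Real.log t); linarith
      · have := le_abs_self (Real.log t); linarith
    simp only [Real.norm_eq_abs]
    exact habs.trans (le_abs_self _)

lemma il_logsin : IntervalIntegrable (fun t => Real.log (Real.sin t)) volume 0 π := by
  have h2 : IntervalIntegrable (fun t => Real.log (Real.sin t)) volume (π/2) π := by
    have h3 := (il_logsin_half.comp_sub_left π)
    simp only [Real.sin_pi_sub, show π-(0:ℝ)=π by ring, show π - π/2 = π/2 by ring] at h3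
    exact h3.symm
  exact il_logsin_half.trans h2

lemma abs_one_sub_exp {t : ℝ} (h0 : 0 ≤ t) (h2 : t ≤ 2*π) :
    ‖1 - Complex.exp (t * Complex.I)‖ = 2 * Real.sin (t/2) := by
  have habs2 : ‖1 - Complex.exp (t * Complex.I)‖
      = Real.sqrt (2 - 2 * Real.cos t) := by
    rw [Complex.norm_def, Complex.normSq_apply]
    rw [Complex.exp_mul_I]
    congr 1
    simp only [Complex.sub_re, Complex.sub_im, Complex.one_re, Complex.one_im,
      Complex.add_re, Complex.add_im, Complex.mul_re, Complex.mul_im,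
      Complex.I_re, Complex.I_im, Complex.cos_ofReal_re, Complex.cos_ofReal_im,
      Complex.sin_ofReal_re, Complex.sin_ofReal_im]
    nlinarith [Real.sin_sq_add_cos_sq t]
  rw [habs2]
  have hcos : 2 - 2 * Real.cos t = (2 * Real.sin (t/2))^2 := by
    have h := Real.cos_two_mul (t/2)
    have h2 : 2 * (t/2) = t := by ring
    rw [h2] at h
    nlinarith [Real.sin_sq_add_cos_sq (t/2)]
  rw [hcos, Real.sqrt_sq]
  have : 0 ≤ Real.sin (t/2) := Real.sin_nonneg_of_nonneg_of_le_pi (by linarith) (by linarith)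
  linarith

noncomputable def flog (t : ℝ) : ℝ := Real.log (‖1 - Complex.exp (t * Complex.I)‖)

lemma flog_periodic : Function.Periodic flog (2*π) := by
  intro t
  unfold flog
  congr 3
  push_cast
  rw [add_mul, Complex.exp_add, Complex.exp_two_pi_mul_I, mul_one]

lemma exp_ne_one {t : ℝ} (h0 : 0 < t) (h2 : t < 2*π) : Complex.exp (t * Complex.I) ≠ 1 := by
  intro h
  rw [Complex.exp_eq_one_iff] at h
  obtain ⟨n, hn⟩ := h
  have h3 : (t:ℂ) = (n:ℂ) * (2*π) := by
    have h4 : (t:ℂ) * Complex.I = ((n:ℂ) * (2*π)) * Complex.I := by rw [hn]; ring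
    exact mul_right_cancel₀ Complex.I_ne_zero h4
  have h5 : t = (n:ℝ) * (2*π) := by exact_mod_cast h3
  rcases le_or_gt n 0 with hn0 | hn0
  · have : (n:ℝ) ≤ 0 := by exact_mod_cast hn0
    nlinarith [Real.pi_pos]
  · have : (1:ℝ) ≤ (n:ℝ) := by exact_mod_cast hn0
    nlinarith [Real.pi_pos]

lemma il_flog : IntervalIntegrable flog volume 0 (2*π) := by
  have hg : IntervalIntegrable (fun t => Real.log 2 + Real.log (Real.sin (t * (1/2)))) volume 0 (2*π) := by
    have h1 := il_logsin.comp_mul_right (c := 1/2) enorm_ne_top enorm_ne_top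
    norm_num at h1
    have h2 : IntervalIntegrable (fun t => Real.log (Real.sin (t * (1/2)))) volume 0 (2*π) := by
      simpa [mul_comm] using h1
    exact intervalIntegrable_const.add h2
  rw [intervalIntegrable_iff_integrableOn_Ioc_of_le (by positivity)]
  rw [intervalIntegrable_iff_integrableOn_Ioc_of_le (by positivity)] at hg
  apply hg.congr
  have hne : ∀ᵐ (t:ℝ) ∂(volume.restrict (Ioc 0 (2*π))), t ≠ 2*π := by
    apply MeasureTheory.ae_restrict_of_ae
    rw [MeasureTheory.ae_iff]
    have : {t : ℝ | ¬ t ≠ 2*π} = {2*π} := by ext t; simp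
    rw [this]
    exact measure_singleton _
  filter_upwards [MeasureTheory.ae_restrict_mem measurableSet_Ioc, hne] with t ht htne
  have h0 : 0 < t := ht.1
  have h2 : t < 2*π := lt_of_le_of_ne ht.2 htne
  have hsin : 0 < Real.sin (t/2) := by
    apply Real.sin_pos_of_pos_of_lt_pi (by linarith) (by linarith)
  rw [flog, abs_one_sub_exp h0.le ht.2, Real.log_mul two_ne_zero hsin.ne', mul_one_div]

lemma il_flog' : IntervalIntegrable flog volume (2*π) (4*π) := by
  have h := il_flog.comp_sub_right (2*π)
  simp only [Function.Periodic.sub_eq flog_periodic] at h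
  have e1 : (0:ℝ) + 2*π = 2*π := by ring
  have e2 : 2*π + 2*π = 4*π := by ring
  rw [e1, e2] at h
  exact h

lemma flog_integral_zero : ∫ t in (0:ℝ)..(2*π), flog t = 0 := by
  set F := ∫ t in (0:ℝ)..(2*π), flog t with hF
  have il_shift : IntervalIntegrable (fun t => flog (t + π)) volume 0 (2*π) := by
    have hππ : IntervalIntegrable flog volume π (3*π) := by
      have hA : IntervalIntegrable flog volume π (2*π) := by
        apply il_flog.mono_set
        rw [Set.uIcc_of_le (by linarith [Real.pi_pos]), Set.uIcc_of_le (by positivity)]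
        exact Set.Icc_subset_Icc (by linarith [Real.pi_pos]) le_rfl
      have hB : IntervalIntegrable flog volume (2*π) (3*π) := by
        apply il_flog'.mono_set
        rw [Set.uIcc_of_le (by linarith [Real.pi_pos]), Set.uIcc_of_le (by linarith [Real.pi_pos])]
        exact Set.Icc_subset_Icc le_rfl (by linarith [Real.pi_pos])
      exact hA.trans hB
    have h := hππ.comp_add_right π
    have e1 : π - π = 0 := by ring
    have e2 : 3*π - π = 2*π := by ring
    rwa [e1, e2] at h
  have key : (2:ℝ) • ∫ t in (0:ℝ)..(2*π), flog (2*t) = F + F := by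
    rw [intervalIntegral.smul_integral_comp_mul_left flog 2]
    have e1 : (2:ℝ) * 0 = 0 := by ring
    have e2 : (2:ℝ) * (2*π) = 4*π := by ring
    rw [e1, e2]
    rw [← intervalIntegral.integral_add_adjacent_intervals il_flog il_flog']
    congr 1
    have := flog_periodic.intervalIntegral_add_eq (2*π) 0
    simp only [zero_add] at this
    rw [show 2*π+2*π = 4*π by ring] at this
    exact this
  have split : ∫ t in (0:ℝ)..(2*π), flog (2*t) = F + F := by
    have hcongr : ∫ t in (0:ℝ)..(2*π), flog (2*t)
        = ∫ t in (0:ℝ)..(2*π), (flog t + flog (t + π)) := by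
      apply intervalIntegral.integral_congr_ae
      have hne : ∀ᵐ (t:ℝ), t ≠ 2*π ∧ t ≠ π := by
        rw [MeasureTheory.ae_iff]
        have : {t : ℝ | ¬ (t ≠ 2*π ∧ t ≠ π)} = {2*π} ∪ {π} := by
          ext t
          simp only [mem_setOf_eq, not_and_or, not_not, ne_eq, Set.mem_union,
            Set.mem_singleton_iff]
        rw [this]
        exact le_antisymm (le_trans (measure_union_le _ _) (by simp)) zero_le
      filter_upwards [hne] with t htne htmem
      rw [Set.uIoc_of_le (by positivity)] at htmem
      have h0 : 0 < t := htmem.1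
      have h2 : t < 2*π := lt_of_le_of_ne htmem.2 htne.1
      have hfac : 1 - Complex.exp ((2*t : ℝ) * Complex.I)
          = (1 - Complex.exp (t * Complex.I)) * (1 + Complex.exp (t * Complex.I)) := by
        have : ((2*t : ℝ) : ℂ) * Complex.I = t * Complex.I + t * Complex.I := by push_cast; ring
        rw [this, Complex.exp_add]
        ring
      have hne1 : (1 : ℂ) - Complex.exp (t * Complex.I) ≠ 0 := by
        intro hcon
        exact exp_ne_one h0 h2 (sub_eq_zero.mp hcon).symm
      have hne2 : (1 : ℂ) + Complex.exp (t * Complex.I) ≠ 0 := by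
        intro hcon
        have hexp : Complex.exp ((t+π : ℝ) * Complex.I) = 1 := by
          push_cast
          rw [add_mul, Complex.exp_add, Complex.exp_pi_mul_I]
          have : Complex.exp (t * Complex.I) = -1 := by linear_combination hcon
          rw [this]; ring
        have htπ : t + π ≠ 2*π := by intro hc; exact htne.2 (by linarith)
        rcases lt_or_gt_of_ne htπ with hlt | hgt
        · exact exp_ne_one (by linarith [Real.pi_pos]) hlt hexp
        · -- t + π ∈ (2π, 3π): use exp((t+π-2π) I) = 1 with t-π ∈ (0, π)
          have hexp2 : Complex.exp ((t - π : ℝ) * Complex.I) = 1 := by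
            have : ((t - π : ℝ) : ℂ) * Complex.I
                = ((t + π : ℝ) : ℂ) * Complex.I + (-(2*π) : ℝ) * Complex.I := by push_cast; ring
            rw [this, Complex.exp_add, hexp, one_mul]
            have : ((-(2*π) : ℝ) : ℂ) * Complex.I = -(2*↑π*Complex.I) := by push_cast; ring
            rw [this, Complex.exp_neg, Complex.exp_two_pi_mul_I]
            norm_num
          exact exp_ne_one (by linarith) (by linarith [Real.pi_pos]) hexp2
      have habs : ‖1 + Complex.exp ((t:ℝ) * Complex.I)‖
          = ‖1 - Complex.exp ((t+π:ℝ) * Complex.I)‖ := by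
        rw [show ((t+π : ℝ) : ℂ) * Complex.I = (t:ℝ) * Complex.I + (π:ℝ) * Complex.I by
          push_cast; ring, Complex.exp_add, Complex.exp_pi_mul_I]
        ring_nf
      unfold flog
      rw [hfac, norm_mul, Real.log_mul (norm_ne_zero_iff.mpr hne1) (norm_ne_zero_iff.mpr hne2), habs]
    rw [hcongr, intervalIntegral.integral_add il_flog il_shift]
    congr 1
    rw [intervalIntegral.integral_comp_add_right flog π]
    have := flog_periodic.intervalIntegral_add_eq π 0
    simp only [zero_add] at this
    rw [show (0:ℝ)+π = π by ring, show 2*π+π = π + 2*π by ring]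
    exact this
  have h4 : (2:ℝ) * (F + F) = F + F := by
    rw [split, smul_eq_mul] at key
    exact key
  linarith


lemma key_integral {p q : ℝ} (hq : 0 ≤ q) (hqp : q ≤ p) (hp : 0 < p) :
    ∫ t in (0:ℝ)..(2*π), Real.log (‖(p:ℂ) - (q:ℂ) * Complex.exp (t * Complex.I)‖)
      = 2 * π * Real.log p := by
  rcases eq_or_lt_of_le hqp with rfl | hqlt
  · -- q = p
    have hcongr : ∫ t in (0:ℝ)..(2*π),
        Real.log (‖(q:ℂ) - (q:ℂ) * Complex.exp (t * Complex.I)‖)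
        = ∫ t in (0:ℝ)..(2*π), (Real.log q + flog t) := by
      apply intervalIntegral.integral_congr_ae
      have hne : ∀ᵐ (t:ℝ), t ≠ 2*π := by
        rw [MeasureTheory.ae_iff]
        have : {t : ℝ | ¬ t ≠ 2*π} = {2*π} := by ext t; simp
        rw [this]; exact measure_singleton _
      filter_upwards [hne] with t htne htmem
      rw [Set.uIoc_of_le (by positivity)] at htmem
      have h2 : t < 2*π := lt_of_le_of_ne htmem.2 htne
      have hfac : (q:ℂ) - (q:ℂ) * Complex.exp (t * Complex.I)
          = (q:ℂ) * (1 - Complex.exp (t * Complex.I)) := by ring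
      have hne1 : (1:ℂ) - Complex.exp (t * Complex.I) ≠ 0 := by
        intro hcon
        have hexp : Complex.exp ((t:ℝ) * Complex.I) = 1 := (sub_eq_zero.mp hcon).symm
        rw [Complex.exp_eq_one_iff] at hexp
        obtain ⟨n, hn⟩ := hexp
        have h3 : (t:ℂ) = (n:ℂ) * (2*π) := by
          have h4 : (t:ℂ) * Complex.I = ((n:ℂ) * (2*π)) * Complex.I := by rw [hn]; ring
          exact mul_right_cancel₀ Complex.I_ne_zero h4
        have h5 : t = (n:ℝ) * (2*π) := by exact_mod_cast h3
        rcases le_or_gt n 0 with hn0 | hn0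
        · have : (n:ℝ) ≤ 0 := by exact_mod_cast hn0
          nlinarith [Real.pi_pos, htmem.1]
        · have : (1:ℝ) ≤ (n:ℝ) := by exact_mod_cast hn0
          nlinarith [Real.pi_pos]
      rw [hfac, norm_mul, Real.log_mul (by simp [hp.ne']) (norm_ne_zero_iff.mpr hne1),
        Complex.norm_real, Real.norm_eq_abs, abs_of_pos hp]
      rfl
    rw [hcongr, intervalIntegral.integral_add intervalIntegrable_const il_flog,
      flog_integral_zero, intervalIntegral.integral_const]
    simp [smul_eq_mul]
  rcases eq_or_lt_of_le hq with rfl | hq0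
  · -- q = 0
    simp only [Complex.ofReal_zero, zero_mul, sub_zero, Complex.norm_real, Real.norm_eq_abs,
      abs_of_pos hp, intervalIntegral.integral_const, smul_eq_mul]
  · -- 0 < q < p
    set F : ℂ → ℂ := fun ζ => Complex.log ((p:ℂ) - ζ) with hFdef
    have hslit : ∀ ζ : ℂ, ‖ζ‖ ≤ q → (p:ℂ) - ζ ∈ Complex.slitPlane := by
      intro ζ hζ
      rw [Complex.mem_slitPlane_iff]
      left
      have : ζ.re ≤ ‖ζ‖ := Complex.re_le_norm ζ
      simp only [Complex.sub_re, Complex.ofReal_re]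
      linarith
    have hd : DiffContOnCl ℂ F (Metric.ball 0 q) := by
      apply DifferentiableOn.diffContOnCl
      intro ζ hζ
      have hζq : ‖ζ‖ ≤ q := by
        have := Metric.closure_ball_subset_closedBall hζ
        simpa [Complex.dist_eq] using this
      apply DifferentiableAt.differentiableWithinAt
      exact (Complex.differentiableAt_log (hslit ζ hζq)).comp ζ
        ((differentiableAt_const _).sub differentiableAt_id)
    have hcauchy := hd.circleIntegral_sub_inv_smul (Metric.mem_ball_self hq0)
    have h1 : (∮ z in C(0, q), (z - 0)⁻¹ • F z)
        = ∫ θ in (0:ℝ)..(2*π), Complex.I * F ((q:ℂ) * Complex.exp (θ * Complex.I)) := by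
      rw [circleIntegral]
      apply intervalIntegral.integral_congr
      intro θ _
      dsimp only
      rw [deriv_circleMap]
      have hcm : circleMap 0 q θ = (q:ℂ) * Complex.exp (θ * Complex.I) := by
        simp [circleMap]
      have hne : (q:ℂ) * Complex.exp (θ * Complex.I) ≠ 0 :=
        mul_ne_zero (by exact_mod_cast hq0.ne') (Complex.exp_ne_zero _)
      rw [hcm, smul_eq_mul, smul_eq_mul, sub_zero]
      have hq' : (q:ℂ) ≠ 0 := by exact_mod_cast hq0.ne'
      field_simp
    have h2 : Complex.I * ∫ θ in (0:ℝ)..(2*π), F ((q:ℂ) * Complex.exp (θ * Complex.I))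
        = (2 * π * Complex.I) * Complex.log p := by
      rw [← intervalIntegral.integral_const_mul, ← h1, hcauchy]
      simp [hFdef, smul_eq_mul]
    have hC : ∫ θ in (0:ℝ)..(2*π), Complex.log ((p:ℂ) - (q:ℂ) * Complex.exp (θ * Complex.I))
        = 2 * π * Complex.log p := by
      apply mul_left_cancel₀ Complex.I_ne_zero
      rw [h2]
      ring
    have hcont : Continuous fun θ : ℝ =>
        Complex.log ((p:ℂ) - (q:ℂ) * Complex.exp (θ * Complex.I)) := by
      have hG : Continuous fun θ : ℝ => (p:ℂ) - (q:ℂ) * Complex.exp (θ * Complex.I) := by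
        continuity
      rw [continuous_iff_continuousAt]
      intro θ
      apply (continuousAt_clog ?_).comp hG.continuousAt
      apply hslit
      rw [norm_mul, Complex.norm_real, Real.norm_eq_abs, Complex.norm_exp_ofReal_mul_I, mul_one, _root_.abs_of_nonneg hq]
      
    have ii : IntervalIntegrable
        (fun θ : ℝ => Complex.log ((p:ℂ) - (q:ℂ) * Complex.exp (θ * Complex.I)))
        volume 0 (2*π) := hcont.intervalIntegrable 0 (2*π)
    have hre := Complex.reCLM.intervalIntegral_comp_comm ii
    rw [hC] at hre
    have : ∀ θ : ℝ, Complex.reCLM (Complex.log ((p:ℂ) - (q:ℂ) * Complex.exp (θ * Complex.I)))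
        = Real.log (‖(p:ℂ) - (q:ℂ) * Complex.exp (θ * Complex.I)‖) := by
      intro θ
      simp [Complex.log_re]
    rw [intervalIntegral.integral_congr (fun θ _ => this θ)] at hre
    rw [hre]
    simp [Complex.log_re, Complex.norm_real, abs_of_pos hp]

theorem averaged_log_kernel_eq (z w : ℂ) (hz : 0 ≤ z.re) (hw : 0 ≤ w.re)
    (h : ¬(z = w ∧ z.re = 0)) :
    (1 / (2 * π)) * ∫ t in (0:ℝ)..(2 * π),
        Real.log (1 / Real.sqrt (z.re ^ 2 + w.re ^ 2 + (z.im - w.im) ^ 2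
          - 2 * z.re * w.re * Real.cos t))
      = Real.log (2 / (‖z - w‖ + ‖z - (-(starRingEnd ℂ) w)‖)) := by
  set r := ‖z - w‖ with hrdef
  set s := ‖z - (-(starRingEnd ℂ) w)‖ with hsdef
  have hr : 0 ≤ r := norm_nonneg _
  have hs : 0 ≤ s := norm_nonneg _
  have hr2 : r^2 = (z.re - w.re)^2 + (z.im - w.im)^2 := by
    rw [hrdef, Complex.sq_norm, Complex.normSq_apply, Complex.sub_re, Complex.sub_im]
    ring
  have hs2 : s^2 = (z.re + w.re)^2 + (z.im - w.im)^2 := by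
    rw [hsdef, Complex.sq_norm, Complex.normSq_apply, Complex.sub_re, Complex.sub_im,
      Complex.neg_re, Complex.neg_im, Complex.conj_re, Complex.conj_im]
    ring
  have hrs : r ≤ s := by
    have hsq : r^2 ≤ s^2 := by rw [hr2, hs2]; nlinarith [mul_nonneg hz hw]
    rw [← Real.sqrt_sq hr, ← Real.sqrt_sq hs]
    exact Real.sqrt_le_sqrt hsq
  set p := (r + s) / 2 with hpdef
  set q := (s - r) / 2 with hqdef
  have hq0 : 0 ≤ q := by rw [hqdef]; linarith
  have hqp : q ≤ p := by rw [hqdef, hpdef]; linarith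
  have hp : 0 < p := by
    rcases lt_or_eq_of_le (by positivity : (0:ℝ) ≤ p) with h' | h'
    · exact h'
    exfalso
    have hr0 : r = 0 := by rw [hpdef] at h'; linarith
    have hs0 : s = 0 := by rw [hpdef] at h'; linarith
    have hzw : z = w := by
      rw [hrdef] at hr0
      exact sub_eq_zero.mp (norm_eq_zero.mp hr0)
    have hzw2 : z = -(starRingEnd ℂ) w := by
      rw [hsdef] at hs0
      exact sub_eq_zero.mp (norm_eq_zero.mp hs0)
    apply h
    refine ⟨hzw, ?_⟩
    have h1 : z.re = w.re := by rw [hzw]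
    have h2 : z.re = -w.re := by rw [hzw2]; simp
    linarith
  have hA : p^2 + q^2 = z.re^2 + w.re^2 + (z.im - w.im)^2 := by
    rw [hpdef, hqdef]
    linear_combination (1/2) * hr2 + (1/2) * hs2
  have hB : 2 * (z.re * w.re) = 2 * (p * q) := by
    rw [hpdef, hqdef]
    linear_combination (1/2) * hr2 - (1/2) * hs2
  have hpt : ∀ t : ℝ,
      Real.log (1 / Real.sqrt (z.re ^ 2 + w.re ^ 2 + (z.im - w.im) ^ 2
          - 2 * z.re * w.re * Real.cos t))
      = -Real.log (‖(p:ℂ) - (q:ℂ) * Complex.exp (t * Complex.I)‖) := by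
    intro t
    have hsc := Real.sin_sq_add_cos_sq t
    have hXY : z.re ^ 2 + w.re ^ 2 + (z.im - w.im) ^ 2 - 2 * z.re * w.re * Real.cos t
        = (p - q * Real.cos t)^2 + (q * Real.sin t)^2 := by
      linear_combination (-1) * hA + (- Real.cos t) * hB + (- q^2) * hsc
    have hsq : Real.sqrt (z.re ^ 2 + w.re ^ 2 + (z.im - w.im) ^ 2
          - 2 * z.re * w.re * Real.cos t)
        = ‖(p:ℂ) - (q:ℂ) * Complex.exp (t * Complex.I)‖ := by
      rw [Complex.norm_def, Complex.normSq_apply, Complex.exp_mul_I]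
      simp only [Complex.sub_re, Complex.sub_im, Complex.ofReal_re, Complex.ofReal_im,
        Complex.mul_re, Complex.mul_im, Complex.add_re, Complex.add_im,
        Complex.I_re, Complex.I_im, Complex.cos_ofReal_re, Complex.cos_ofReal_im,
        Complex.sin_ofReal_re, Complex.sin_ofReal_im]
      rw [hXY]
      congr 1
      ring
    rw [one_div, Real.log_inv, hsq]
  rw [intervalIntegral.integral_congr (fun t _ => hpt t), intervalIntegral.integral_neg,
    key_integral hq0 hqp hp]
  have hfin : 2 / (r + s) = p⁻¹ := by
    rw [hpdef]
    rw [inv_div]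
  rw [hfin, Real.log_inv]
  have hπ : π ≠ 0 := Real.pi_ne_zero
  field_simp
end

section
/- Fix u ≥ 0 and real numbers y ≠ v. Then the function x ↦ K(x + iy, u + iv) = log(2/(|x+iy − (u+iv)| + |x+iy − (−u+iv)|)) is strictly decreasing on [0, ∞). -/
open Complex

noncomputable def K (z w : ℂ) : ℝ :=
  Real.log (2 / (‖z - w‖ + ‖z - (-(starRingEnd ℂ) w)‖))

theorem K_strictAntiOn_horizontal (u : ℝ) (hu : 0 ≤ u) (y v : ℝ) (hyv : y ≠ v) :
    StrictAntiOn (fun x : ℝ => K (⟨x, y⟩ : ℂ) (⟨u, v⟩ : ℂ)) (Set.Ici 0) := by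
  have h0 : y - v ≠ 0 := sub_ne_zero.mpr hyv
  set c : ℝ := (y - v) ^ 2 with hc
  have hcpos : 0 < c := by positivity
  set f : ℝ → ℝ := fun x => Real.sqrt ((x - u) ^ 2 + c) + Real.sqrt ((x + u) ^ 2 + c) with hf
  have hfpos : ∀ x : ℝ, 0 < f x := by
    intro x
    have h1 : 0 < Real.sqrt ((x - u) ^ 2 + c) := Real.sqrt_pos.mpr (by positivity)
    have h2 : 0 ≤ Real.sqrt ((x + u) ^ 2 + c) := Real.sqrt_nonneg _
    simp only [hf]
    linarith
  have hmono : StrictMonoOn f (Set.Ici 0) := by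
    have hderiv : ∀ x : ℝ, HasDerivAt f
        ((x - u) / Real.sqrt ((x - u) ^ 2 + c) + (x + u) / Real.sqrt ((x + u) ^ 2 + c)) x := by
      intro x
      have h1 : HasDerivAt (fun x : ℝ => (x - u) ^ 2 + c) (2 * (x - u)) x := by
        have := (((hasDerivAt_id x).sub_const u).pow 2).add_const c
        simpa using this
      have h2 : HasDerivAt (fun x : ℝ => (x + u) ^ 2 + c) (2 * (x + u)) x := by
        have := (((hasDerivAt_id x).add_const u).pow 2).add_const c
        simpa using this
      have hne1 : (x - u) ^ 2 + c ≠ 0 := by positivity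
      have hne2 : (x + u) ^ 2 + c ≠ 0 := by positivity
      have s1 := (Real.hasDerivAt_sqrt hne1).comp x h1
      have s2 := (Real.hasDerivAt_sqrt hne2).comp x h2
      have key := s1.add s2
      have q1 : Real.sqrt ((x - u) ^ 2 + c) ≠ 0 := ne_of_gt (Real.sqrt_pos.mpr (by positivity))
      have q2 : Real.sqrt ((x + u) ^ 2 + c) ≠ 0 := ne_of_gt (Real.sqrt_pos.mpr (by positivity))
      refine key.congr_deriv ?_
      field_simp
    apply strictMonoOn_of_deriv_pos (convex_Ici 0)
    · exact fun x _ => ((hderiv x).continuousAt).continuousWithinAt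
    · intro x hx
      rw [interior_Ici] at hx
      rw [(hderiv x).deriv]
      have hd1 : 0 < Real.sqrt ((x - u) ^ 2 + c) := Real.sqrt_pos.mpr (by positivity)
      have hd2 : 0 < Real.sqrt ((x + u) ^ 2 + c) := Real.sqrt_pos.mpr (by positivity)
      have hx0 : 0 < x := hx
      have hD2 : 0 < (x + u) / Real.sqrt ((x + u) ^ 2 + c) := div_pos (by linarith) hd2
      rcases le_or_gt u x with h | h
      · have : 0 ≤ (x - u) / Real.sqrt ((x - u) ^ 2 + c) :=
          div_nonneg (by linarith) hd1.le
        linarith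
      · have key : (u - x) / Real.sqrt ((x - u) ^ 2 + c)
            < (x + u) / Real.sqrt ((x + u) ^ 2 + c) := by
          rw [div_lt_div_iff₀ hd1 hd2]
          have hs1 : Real.sqrt ((x - u) ^ 2 + c) ^ 2 = (x - u) ^ 2 + c :=
            Real.sq_sqrt (by positivity)
          have hs2 : Real.sqrt ((x + u) ^ 2 + c) ^ 2 = (x + u) ^ 2 + c :=
            Real.sq_sqrt (by positivity)
          have hsq : ((u - x) * Real.sqrt ((x + u) ^ 2 + c)) ^ 2
              < ((x + u) * Real.sqrt ((x - u) ^ 2 + c)) ^ 2 := by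
            rw [mul_pow, mul_pow, hs1, hs2]
            nlinarith [mul_pos (mul_pos hx0 (hx0.trans h)) hcpos]
          have hr : 0 ≤ (x + u) * Real.sqrt ((x - u) ^ 2 + c) :=
            mul_nonneg (by linarith) hd1.le
          exact lt_of_pow_lt_pow_left₀ 2 hr hsq
        have hneg : (x - u) / Real.sqrt ((x - u) ^ 2 + c)
            = -((u - x) / Real.sqrt ((x - u) ^ 2 + c)) := by ring
        rw [hneg]
        linarith
  intro a ha b hb hab
  have hK : ∀ x : ℝ, K (⟨x, y⟩ : ℂ) (⟨u, v⟩ : ℂ) = Real.log (2 / f x) := by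
    intro x
    have e1 : ‖(⟨x, y⟩ : ℂ) - ⟨u, v⟩‖ = Real.sqrt ((x - u) ^ 2 + c) := by
      rw [Complex.norm_def]
      congr 1
      simp only [Complex.normSq_apply, Complex.sub_re, Complex.sub_im, hc]
      ring
    have e2 : ‖(⟨x, y⟩ : ℂ) - (-(starRingEnd ℂ) (⟨u, v⟩ : ℂ))‖
        = Real.sqrt ((x + u) ^ 2 + c) := by
      rw [Complex.norm_def]
      congr 1
      simp only [Complex.normSq_apply, Complex.sub_re, Complex.sub_im, Complex.neg_re,
        Complex.neg_im, Complex.conj_re, Complex.conj_im, hc]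
      ring
    simp only [K, e1, e2, hf]
  simp only [hK]
  apply Real.log_lt_log (div_pos (by norm_num) (hfpos b))
  exact div_lt_div_of_pos_left (by norm_num) (hfpos a) (hmono ha hb hab)
end

section
/- Let γ(t) = R + it for t ∈ [c,d] with R > 0. For s ≠ t in [c,d], K(γ(t), γ(s)) = log 2 − log(|s − t| + √(4R² + (s − t)²)), its derivative in t equals sgn(s − t)/√(4R² + (s−t)²), and its second derivative in t equals |s − t|/(4R² + (s − t)²)^{3/2}; in particular t ↦ K(γ(t), γ(s)) is strictly convex on [c, s] and on [s, d]. -/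
open Complex

private lemma helper1 (R s t σ : ℝ) (hR : 0 < R) (hσ : σ * σ = 1)
    (hev : ∀ᶠ τ in nhds t, |s - τ| = σ * (s - τ)) :
    HasDerivAt (fun τ => Real.log 2 - Real.log (|s - τ| + Real.sqrt (4 * R ^ 2 + (s - τ) ^ 2)))
      (σ / Real.sqrt (4 * R ^ 2 + (s - t) ^ 2)) t := by
  have hq : 0 < 4 * R ^ 2 + (s - t) ^ 2 := by positivity
  have hsq : 0 < Real.sqrt (4 * R ^ 2 + (s - t) ^ 2) := Real.sqrt_pos.2 hq
  have habs : |s - t| = σ * (s - t) := hev.self_of_nhds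
  have hqd : HasDerivAt (fun τ : ℝ => 4 * R ^ 2 + (s - τ) ^ 2) (-(2 * (s - t))) t := by
    have h1 : HasDerivAt (fun τ : ℝ => s - τ) (-1) t := by
      simpa using (hasDerivAt_id t).const_sub s
    have := (h1.pow 2).const_add (4 * R ^ 2)
    refine this.congr_deriv ?_; ring
  have hsqrt : HasDerivAt (fun τ => Real.sqrt (4 * R ^ 2 + (s - τ) ^ 2))
      (-(s - t) / Real.sqrt (4 * R ^ 2 + (s - t) ^ 2)) t := by
    have := (Real.hasDerivAt_sqrt hq.ne').comp t hqd
    refine this.congr_deriv ?_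
    field_simp
  have hlin : HasDerivAt (fun τ : ℝ => σ * (s - τ)) (-σ) t := by
    have h1 : HasDerivAt (fun τ : ℝ => s - τ) (-1) t := by
      simpa using (hasDerivAt_id t).const_sub s
    simpa using h1.const_mul σ
  have hg := hlin.add hsqrt
  have hgpos : 0 < σ * (s - t) + Real.sqrt (4 * R ^ 2 + (s - t) ^ 2) := by
    rw [← habs]
    have : |s - t| ≤ Real.sqrt (4 * R ^ 2 + (s - t) ^ 2) := by
      rw [← Real.sqrt_sq_eq_abs]
      apply Real.sqrt_le_sqrt; nlinarith
    nlinarith [abs_nonneg (s - t)]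
  have hlog := (hg.log hgpos.ne').const_sub (Real.log 2)
  have heq : (fun τ => Real.log 2 - Real.log (|s - τ| + Real.sqrt (4 * R ^ 2 + (s - τ) ^ 2)))
      =ᶠ[nhds t]
      (fun τ => Real.log 2 - Real.log (σ * (s - τ) + Real.sqrt (4 * R ^ 2 + (s - τ) ^ 2))) := by
    filter_upwards [hev] with τ hτ
    rw [hτ]
  refine HasDerivAt.congr_of_eventuallyEq ?_ heq
  refine hlog.congr_deriv ?_; symm
  set S := Real.sqrt (4 * R ^ 2 + (s - t) ^ 2) with hS
  set u := s - t with hu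
  have h1 : (-σ + -u / S) * S = -(σ * (σ * u + S)) := by
    field_simp; linear_combination u * hσ
  change σ / S = -((-σ + -u / S) / (σ * u + S))
  rw [← neg_div, div_eq_div_iff hsq.ne' hgpos.ne',
    show -(-σ + -u / S) * S = -((-σ + -u / S) * S) by ring, h1, neg_neg]

private lemma helper2 (R s t σ : ℝ) (hR : 0 < R)
    (hev : ∀ᶠ τ in nhds t, Real.sign (s - τ) = σ) :
    HasDerivAt (fun τ => Real.sign (s - τ) / Real.sqrt (4 * R ^ 2 + (s - τ) ^ 2))
      ((σ * (s - t)) / (4 * R ^ 2 + (s - t) ^ 2) ^ ((3:ℝ)/2)) t := by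
  have hq : 0 < 4 * R ^ 2 + (s - t) ^ 2 := by positivity
  have hsq : 0 < Real.sqrt (4 * R ^ 2 + (s - t) ^ 2) := Real.sqrt_pos.2 hq
  have hqd : HasDerivAt (fun τ : ℝ => 4 * R ^ 2 + (s - τ) ^ 2) (-(2 * (s - t))) t := by
    have h1 : HasDerivAt (fun τ : ℝ => s - τ) (-1) t := by
      simpa using (hasDerivAt_id t).const_sub s
    have := (h1.pow 2).const_add (4 * R ^ 2)
    refine this.congr_deriv ?_; ring
  have hsqrt : HasDerivAt (fun τ => Real.sqrt (4 * R ^ 2 + (s - τ) ^ 2))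
      (-(s - t) / Real.sqrt (4 * R ^ 2 + (s - t) ^ 2)) t := by
    have := (Real.hasDerivAt_sqrt hq.ne').comp t hqd
    refine this.congr_deriv ?_
    field_simp
  have hinv := (hsqrt.inv hsq.ne').const_mul σ
  have heq : (fun τ => Real.sign (s - τ) / Real.sqrt (4 * R ^ 2 + (s - τ) ^ 2))
      =ᶠ[nhds t] (fun τ => σ * (Real.sqrt (4 * R ^ 2 + (s - τ) ^ 2))⁻¹) := by
    filter_upwards [hev] with τ hτ
    rw [hτ, div_eq_mul_inv]
  refine HasDerivAt.congr_of_eventuallyEq ?_ heq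
  refine hinv.congr_deriv ?_; symm
  have h32 : (4 * R ^ 2 + (s - t) ^ 2) ^ ((3:ℝ)/2)
      = (4 * R ^ 2 + (s - t) ^ 2) * Real.sqrt (4 * R ^ 2 + (s - t) ^ 2) := by
    rw [show (3:ℝ)/2 = 1 + 1/2 by norm_num, Real.rpow_add hq, Real.rpow_one,
      ← Real.sqrt_eq_rpow]
  rw [h32]
  have hs2 : Real.sqrt (4 * R ^ 2 + (s - t) ^ 2) ^ 2 = 4 * R ^ 2 + (s - t) ^ 2 :=
    Real.sq_sqrt hq.le
  rw [← hs2]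
  field_simp
  rw [Real.sqrt_sq hsq.le]

private lemma K_formula (R s t : ℝ) (hR : 0 < R) (γ : ℝ → ℂ) (hγ : ∀ t, γ t = ⟨R, t⟩) :
    K (γ t) (γ s) = Real.log 2 - Real.log (|s - t| + Real.sqrt (4 * R ^ 2 + (s - t) ^ 2)) := by
  have h1 : ‖γ t - γ s‖ = |s - t| := by
    rw [hγ, hγ]
    simp [Complex.norm_def, Complex.normSq_apply, Complex.sub_re, Complex.sub_im]
    rw [show s - t = -(t - s) by ring, abs_neg, ← Real.sqrt_sq_eq_abs]
    ring_nf
  have h2 : ‖γ t - (-(starRingEnd ℂ) (γ s))‖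
      = Real.sqrt (4 * R ^ 2 + (s - t) ^ 2) := by
    rw [hγ, hγ]
    simp [Complex.norm_def, Complex.normSq_apply, Complex.sub_re, Complex.sub_im]
    ring_nf
  have hpos : 0 < |s - t| + Real.sqrt (4 * R ^ 2 + (s - t) ^ 2) := by
    have h3 : 0 < Real.sqrt (4 * R ^ 2 + (s - t) ^ 2) := Real.sqrt_pos.2 (by positivity)
    nlinarith [abs_nonneg (s - t)]
  rw [K, h1, h2, Real.log_div two_ne_zero hpos.ne']

theorem K_vertical_segment (R c d : ℝ) (hR : 0 < R) (hcd : c ≤ d)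
    (γ : ℝ → ℂ) (hγ : ∀ t, γ t = ⟨R, t⟩)
    (s : ℝ) (hs : s ∈ Set.Icc c d) :
    (∀ t ∈ Set.Icc c d, t ≠ s →
        K (γ t) (γ s) = Real.log 2
          - Real.log (|s - t| + Real.sqrt (4 * R ^ 2 + (s - t) ^ 2))) ∧
    (∀ t ∈ Set.Icc c d, t ≠ s →
        HasDerivAt (fun τ => K (γ τ) (γ s))
          (Real.sign (s - t) / Real.sqrt (4 * R ^ 2 + (s - t) ^ 2)) t) ∧
    (∀ t ∈ Set.Icc c d, t ≠ s →
        HasDerivAt (fun τ => Real.sign (s - τ) / Real.sqrt (4 * R ^ 2 + (s - τ) ^ 2))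
          (|s - t| / (4 * R ^ 2 + (s - t) ^ 2) ^ ((3:ℝ)/2)) t) ∧
    StrictConvexOn ℝ (Set.Icc c s) (fun t => K (γ t) (γ s)) ∧
    StrictConvexOn ℝ (Set.Icc s d) (fun t => K (γ t) (γ s)) := by
  have hfun : (fun t => K (γ t) (γ s))
      = (fun t => Real.log 2 - Real.log (|s - t| + Real.sqrt (4 * R ^ 2 + (s - t) ^ 2))) :=
    funext fun t => K_formula R s t hR γ hγ
  have hFcont : Continuous
      (fun t : ℝ => Real.log 2 - Real.log (|s - t| + Real.sqrt (4 * R ^ 2 + (s - t) ^ 2))) := by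
    apply continuous_const.sub
    apply Continuous.log
    · exact ((continuous_const.sub continuous_id).abs).add
        ((continuous_const.add ((continuous_const.sub continuous_id).pow 2)).sqrt)
    · intro x
      have h3 : 0 < Real.sqrt (4 * R ^ 2 + (s - x) ^ 2) := Real.sqrt_pos.2 (by positivity)
      positivity
  refine ⟨fun t _ _ => K_formula R s t hR γ hγ, ?_, ?_, ?_, ?_⟩
  · intro t _ hts
    rw [hfun]
    rcases lt_or_gt_of_ne hts with h | h
    · rw [Real.sign_of_pos (by linarith : (0:ℝ) < s - t)]
      exact helper1 R s t 1 hR (by norm_num) (by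
        filter_upwards [Iio_mem_nhds h] with τ (hτ : τ < s)
        rw [abs_of_pos (by linarith : (0:ℝ) < s - τ), one_mul])
    · rw [Real.sign_of_neg (by linarith : s - t < 0)]
      exact helper1 R s t (-1) hR (by norm_num) (by
        filter_upwards [Ioi_mem_nhds h] with τ (hτ : s < τ)
        rw [abs_of_neg (by linarith : s - τ < 0)]; ring)
  · intro t _ hts
    rcases lt_or_gt_of_ne hts with h | h
    · have := helper2 R s t 1 hR (by
        filter_upwards [Iio_mem_nhds h] with τ (hτ : τ < s)
        exact Real.sign_of_pos (by linarith))
      convert this using 2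
      rw [abs_of_pos (by linarith : (0:ℝ) < s - t), one_mul]
    · have := helper2 R s t (-1) hR (by
        filter_upwards [Ioi_mem_nhds h] with τ (hτ : s < τ)
        exact Real.sign_of_neg (by linarith))
      convert this using 2
      rw [abs_of_neg (by linarith : s - t < 0)]; ring
  · rw [hfun]
    apply StrictMonoOn.strictConvexOn_of_deriv (convex_Icc c s) hFcont.continuousOn
    intro x hx y hy hxy
    rw [interior_Icc] at hx hy
    have hder : ∀ z ∈ Set.Ioo c s, deriv
        (fun t => Real.log 2 - Real.log (|s - t| + Real.sqrt (4 * R ^ 2 + (s - t) ^ 2))) z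
        = 1 / Real.sqrt (4 * R ^ 2 + (s - z) ^ 2) := by
      intro z hz
      exact (helper1 R s z 1 hR (by norm_num) (by
        filter_upwards [Iio_mem_nhds hz.2] with τ (hτ : τ < s)
        rw [abs_of_pos (by linarith : (0:ℝ) < s - τ), one_mul])).deriv
    rw [hder x hx, hder y hy]
    have h1 : 0 < 4 * R ^ 2 + (s - y) ^ 2 := by positivity
    have h2 : 4 * R ^ 2 + (s - y) ^ 2 < 4 * R ^ 2 + (s - x) ^ 2 := by
      nlinarith [hx.2, hy.2, hxy]
    have h3 : Real.sqrt (4 * R ^ 2 + (s - y) ^ 2) < Real.sqrt (4 * R ^ 2 + (s - x) ^ 2) :=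
      Real.sqrt_lt_sqrt h1.le h2
    exact one_div_lt_one_div_of_lt (Real.sqrt_pos.2 h1) h3
  · rw [hfun]
    apply StrictMonoOn.strictConvexOn_of_deriv (convex_Icc s d) hFcont.continuousOn
    intro x hx y hy hxy
    rw [interior_Icc] at hx hy
    have hder : ∀ z ∈ Set.Ioo s d, deriv
        (fun t => Real.log 2 - Real.log (|s - t| + Real.sqrt (4 * R ^ 2 + (s - t) ^ 2))) z
        = -1 / Real.sqrt (4 * R ^ 2 + (s - z) ^ 2) := by
      intro z hz
      exact (helper1 R s z (-1) hR (by norm_num) (by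
        filter_upwards [Ioi_mem_nhds hz.1] with τ (hτ : s < τ)
        rw [abs_of_neg (by linarith : s - τ < 0)]; ring)).deriv
    rw [hder x hx, hder y hy]
    have h1 : 0 < 4 * R ^ 2 + (s - x) ^ 2 := by positivity
    have h2 : 4 * R ^ 2 + (s - x) ^ 2 < 4 * R ^ 2 + (s - y) ^ 2 := by
      nlinarith [hx.1, hy.1, hxy]
    have h3 : Real.sqrt (4 * R ^ 2 + (s - x) ^ 2) < Real.sqrt (4 * R ^ 2 + (s - y) ^ 2) :=
      Real.sqrt_lt_sqrt h1.le h2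
    have h4 := one_div_lt_one_div_of_lt (Real.sqrt_pos.2 h1) h3
    rw [neg_div, neg_div, neg_lt_neg_iff]
    exact one_div_lt_one_div_of_lt (Real.sqrt_pos.2 h1) h3
end

section
/- Let γ(t) = R + e^{it}, t ∈ [−π/2, π/2], R > 0, and w = γ(s)* = −conj(γ(s)). Then N(t)·u_w(t) = −(2R cos t + cos(s+t) + 1)/√((2R + cos s + cos t)² + (sin s − sin t)²) and κ(t) + (N(t)·u_w(t))/r_w(t) = 1/2 + 2R(R + cos s)/((2R + cos s + cos t)² + (sin s − sin t)²); in particular both N(t)·u_w(t) < 0 and κ(t) + (N(t)·u_w(t))/r_w(t) > 0 hold for all s, t ∈ [−π/2, π/2] with s ≠ t. -/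
open Complex Real

/-- Real dot product on ℂ ≅ ℝ². -/
noncomputable def dotC (z w : ℂ) : ℝ := (z * (starRingEnd ℂ) w).re

theorem circle_normal_dot_reflected (R : ℝ) (hR : 0 < R)
    (s t : ℝ) (hs : s ∈ Set.Icc (-(π/2)) (π/2)) (ht : t ∈ Set.Icc (-(π/2)) (π/2))
    (hst : s ≠ t) :
    let γ : ℝ → ℂ := fun τ => (R : ℂ) + Complex.exp (τ * Complex.I)
    let N : ℂ := -Complex.exp (t * Complex.I)
    let w : ℂ := -(starRingEnd ℂ) (γ s)
    let u : ℂ := (γ t - w) / (‖γ t - w‖ : ℂ)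
    dotC N u = -(2 * R * Real.cos t + Real.cos (s + t) + 1) /
        Real.sqrt ((2 * R + Real.cos s + Real.cos t) ^ 2 + (Real.sin s - Real.sin t) ^ 2) ∧
    1 + dotC N u / ‖γ t - w‖
      = 1 / 2 + 2 * R * (R + Real.cos s) /
          ((2 * R + Real.cos s + Real.cos t) ^ 2 + (Real.sin s - Real.sin t) ^ 2) ∧
    dotC N u < 0 ∧
    0 < 1 + dotC N u / ‖γ t - w‖ := by
  intro γ N w u
  have hcs : 0 ≤ Real.cos s := Real.cos_nonneg_of_mem_Icc (by simpa using hs)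
  have hct : 0 ≤ Real.cos t := Real.cos_nonneg_of_mem_Icc (by simpa using ht)
  have hre : (γ t - w).re = 2 * R + Real.cos s + Real.cos t := by
    simp [γ, w, Complex.exp_mul_I, Complex.cos_ofReal_re, Complex.sin_ofReal_re]; ring
  have him : (γ t - w).im = -(Real.sin s - Real.sin t) := by
    simp [γ, w, Complex.exp_mul_I, Complex.cos_ofReal_im, Complex.sin_ofReal_im,
      Complex.cos_ofReal_re, Complex.sin_ofReal_re]
  set D2 : ℝ := (2 * R + Real.cos s + Real.cos t) ^ 2 + (Real.sin s - Real.sin t) ^ 2 with hD2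
  have hD2pos : 0 < D2 := by nlinarith [sq_nonneg (Real.sin s - Real.sin t)]
  have habs : ‖γ t - w‖ = Real.sqrt D2 := by
    rw [Complex.norm_def, Complex.normSq_apply, hre, him, hD2]; ring_nf
  have hDpos : 0 < Real.sqrt D2 := Real.sqrt_pos.mpr hD2pos
  -- cos(s+t) > -1
  have hπ : (0:ℝ) < π := Real.pi_pos
  have hcases : s + t = π ∨ s + t = -π ∨ s + t ∈ Set.Ioo (-π) π := by
    rcases eq_or_lt_of_le (show s + t ≤ π by linarith [hs.2, ht.2]) with h | h
    · exact Or.inl h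
    rcases eq_or_lt_of_le (show -π ≤ s + t by linarith [hs.1, ht.1]) with h' | h'
    · exact Or.inr (Or.inl h'.symm)
    · exact Or.inr (Or.inr ⟨h', h⟩)
  have hcos1 : -1 < Real.cos (s + t) := by
    rcases hcases with h | h | h
    · exact absurd (show s = t by linarith [hs.2, ht.2]) hst
    · exact absurd (show s = t by linarith [hs.1, ht.1]) hst
    · have hc : 0 < Real.cos ((s + t) / 2) := by
        apply Real.cos_pos_of_mem_Ioo
        constructor <;> [linarith [h.1]; linarith [h.2]]
      have hh := Real.cos_sq ((s + t) / 2)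
      rw [show 2 * ((s + t) / 2) = s + t by ring] at hh
      nlinarith [hh, hc]
  have hnum : 0 < 2 * R * Real.cos t + Real.cos (s + t) + 1 := by
    nlinarith
  -- the dot product
  have hdot : dotC N u = -(2 * R * Real.cos t + Real.cos (s + t) + 1) / Real.sqrt D2 := by
    have : u = (γ t - w) / ((Real.sqrt D2 : ℝ) : ℂ) := by rw [← habs]
    rw [dotC, this, map_div₀, Complex.conj_ofReal, ← mul_div_assoc, Complex.div_ofReal_re,
      Complex.mul_re, Complex.conj_re, Complex.conj_im, hre, him]
    have hNre : N.re = -Real.cos t := by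
      simp [N, Complex.exp_mul_I, Complex.cos_ofReal_re]
    have hNim : N.im = -Real.sin t := by
      simp [N, Complex.exp_mul_I, Complex.sin_ofReal_re]
    rw [hNre, hNim, Real.cos_add]
    have := Real.sin_sq_add_cos_sq t
    field_simp
    nlinarith [this]
  have hkey : D2 = 2 * (2 * R * Real.cos t + Real.cos (s + t) + 1) + 4 * R * (R + Real.cos s) := by
    rw [hD2, Real.cos_add]
    nlinarith [Real.sin_sq_add_cos_sq s, Real.sin_sq_add_cos_sq t]
  have heq2 : 1 + dotC N u / ‖γ t - w‖
      = 1 / 2 + 2 * R * (R + Real.cos s) / D2 := by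
    rw [hdot, habs, div_div, Real.mul_self_sqrt hD2pos.le]
    clear_value D2
    field_simp
    linear_combination hkey
  refine ⟨by rw [hdot], heq2, ?_, ?_⟩
  · rw [hdot]; exact div_neg_of_neg_of_pos (by linarith) hDpos
  · rw [heq2]
    have : 0 ≤ 2 * R * (R + Real.cos s) / D2 :=
      div_nonneg (by nlinarith) hD2pos.le
    linarith
end

section
/- For z, w in a fixed compact subset of the open right half-plane, the rescaled kernel K_R(z,w) := 2R(K(R+z, R+w) + log R) converges uniformly as R → ∞ to K_∞(z,w) := −(Re(z − w*) + |z − w|), where w* = −conj(w); in fact K_R(z,w) = K_∞(z,w) + O(1/R). -/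
open Complex

noncomputable def KR (R : ℝ) (z w : ℂ) : ℝ :=
  2 * R * (K ((R : ℂ) + z) ((R : ℂ) + w) + Real.log R)

noncomputable def Kinf (z w : ℂ) : ℝ :=
  -((z - (-(starRingEnd ℂ) w)).re + ‖z - w‖)

lemma log_one_add_sub_le {t : ℝ} (ht : |t| ≤ 1/2) :
    |Real.log (1 + t) - t| ≤ 2 * t ^ 2 := by
  have h1 : |(-t)| < 1 := by rw [abs_neg]; linarith
  have h := Real.abs_log_sub_add_sum_range_le h1 1
  simp only [Finset.range_one, Finset.sum_singleton, pow_one] at h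
  have h2 : (1:ℝ)/2 ≤ 1 - |(-t)| := by rw [abs_neg]; linarith
  have h3 : |(-t)| ^ 2 / (1 - |(-t)|) ≤ 2 * t ^ 2 := by
    rw [abs_neg, _root_.sq_abs]
    rw [div_le_iff₀ (by rw [abs_neg] at h2; linarith [abs_nonneg t])]
    nlinarith [sq_nonneg t, abs_nonneg t]
  have h4 : |Real.log (1 + t) - t| = |(-t) / ((0:ℕ) + 1 : ℝ) + Real.log (1 - -t)| := by
    congr 1
    rw [sub_neg_eq_add]
    push_cast
    ring
  calc |Real.log (1 + t) - t| = |(-t) / ((0:ℕ) + 1 : ℝ) + Real.log (1 - -t)| := h4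
    _ ≤ |(-t)| ^ (1+1) / (1 - |(-t)|) := by convert h using 3 <;> norm_num
    _ ≤ 2 * t ^ 2 := h3

set_option maxHeartbeats 1000000 in
theorem KR_tendsto_Kinf (S : Set ℂ) (hS : IsCompact S) (hSpos : ∀ z ∈ S, 0 < z.re) :
    ∃ C R₀ : ℝ, 0 < R₀ ∧ ∀ R ≥ R₀, ∀ z ∈ S, ∀ w ∈ S,
      |KR R z w - Kinf z w| ≤ C / R := by
  obtain ⟨M, hM1, hM⟩ : ∃ M : ℝ, 1 ≤ M ∧ ∀ z ∈ S, ‖z‖ ≤ M := by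
    obtain ⟨M0, hM0⟩ := hS.isBounded.exists_norm_le
    exact ⟨max M0 1, le_max_right _ _, fun z hz => le_trans (hM0 z hz) (le_max_left _ _)⟩
  set N : ℝ := 2*M + 2*M^2 with hN
  have hN4 : 4 ≤ N := by nlinarith
  refine ⟨4*N^2 + 4*M^2, 2*N, by linarith, ?_⟩
  intro R hR z hz w hw
  have hR8M : 8*M ≤ R := by nlinarith
  have hR1 : (1:ℝ) ≤ R := by linarith
  have hR0 : (0:ℝ) < R := by linarith
  set u : ℂ := z + (starRingEnd ℂ) w with hu_def
  have hu : ‖u‖ ≤ 2*M := by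
    calc ‖u‖ ≤ ‖z‖ + ‖(starRingEnd ℂ) w‖ :=
          norm_add_le _ _
      _ ≤ M + M := by rw [Complex.norm_conj]; exact add_le_add (hM z hz) (hM w hw)
      _ = 2*M := by ring
  set a : ℝ := ‖z - w‖ with ha_def
  have ha0 : 0 ≤ a := norm_nonneg _
  have ha : a ≤ 2*M := by
    have h := norm_sub_le z w
    rw [ha_def]
    linarith [hM z hz, hM w hw]
  set b : ℝ := ‖((2*R:ℝ):ℂ) + u‖ with hb_def
  have hb0 : 0 ≤ b := norm_nonneg _
  have hb2R : |b - 2*R| ≤ ‖u‖ := by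
    have h := abs_norm_sub_norm_le (((2*R:ℝ):ℂ) + u) ((2*R:ℝ):ℂ)
    simp only [add_sub_cancel_left] at h
    have h2 : ‖((2*R:ℝ):ℂ)‖ = 2*R := by
      rw [Complex.norm_real, Real.norm_eq_abs, abs_of_pos (by linarith)]
    rw [h2] at h
    exact h
  have hb_sq : b^2 = 4*R^2 + 4*R*u.re + (‖u‖)^2 := by
    rw [hb_def, Complex.sq_norm, Complex.normSq_apply, Complex.sq_norm, Complex.normSq_apply]
    simp [Complex.add_re, Complex.add_im, Complex.ofReal_re, Complex.ofReal_im]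
    ring
  set e : ℝ := b - 2*R - u.re with he_def
  have hure : |u.re| ≤ ‖u‖ := Complex.abs_re_le_norm u
  have he : |e| ≤ (‖u‖)^2 / R := by
    have hbpos : 0 < b + 2*R := by linarith
    have hcalc : e * (b + 2*R) = (‖u‖)^2 + u.re * (2*R - b) := by
      rw [he_def]; nlinarith [hb_sq]
    have h1 : |e| * (b + 2*R) ≤ 2 * (‖u‖)^2 := by
      rw [← abs_of_pos hbpos, ← abs_mul, hcalc]
      calc |(‖u‖)^2 + u.re * (2*R - b)|
          ≤ |(‖u‖)^2| + |u.re * (2*R - b)| := abs_add_le _ _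
        _ ≤ (‖u‖)^2 + ‖u‖ * ‖u‖ := by
            rw [abs_mul, abs_sq]
            gcongr
            rw [abs_sub_comm] at hb2R
            exact hb2R
        _ = 2 * (‖u‖)^2 := by ring
    rw [le_div_iff₀ hR0]
    calc |e| * R ≤ |e| * (b + 2*R) / 2 := by
          rw [le_div_iff₀ (by norm_num : (0:ℝ) < 2)]
          nlinarith [abs_nonneg e]
      _ ≤ (‖u‖)^2 := by linarith
  have heM : |e| ≤ 4*M^2 := by
    calc |e| ≤ (‖u‖)^2 / R := he
      _ ≤ (2*M)^2 / 1 := by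
          apply div_le_div₀ (by positivity) (by nlinarith [norm_nonneg u]) one_pos hR1
      _ = 4*M^2 := by ring
  set t : ℝ := (a + b - 2*R) / (2*R) with ht_def
  have habe : a + b - 2*R = a + u.re + e := by rw [he_def]; ring
  have ht_bound : |t| ≤ N / R := by
    rw [ht_def, abs_div, abs_of_pos (by linarith : (0:ℝ) < 2*R)]
    rw [div_le_div_iff₀ (by linarith) hR0]
    have h1 : |a + b - 2*R| ≤ 4*M + 4*M^2 := by
      rw [habe]
      calc |a + u.re + e| ≤ |a| + |u.re| + |e| := abs_add_three _ _ _
        _ ≤ 2*M + 2*M + 4*M^2 := by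
            rw [_root_.abs_of_nonneg ha0]
            have h2 : |u.re| ≤ 2*M := le_trans hure hu
            linarith
        _ ≤ 4*M + 4*M^2 := by linarith
    calc |a + b - 2*R| * R ≤ (4*M + 4*M^2) * R :=
          mul_le_mul_of_nonneg_right h1 (le_of_lt hR0)
      _ = N * (2*R) := by rw [hN]; ring
  have ht_half : |t| ≤ 1/2 := by
    calc |t| ≤ N / R := ht_bound
      _ ≤ N / (2*N) := by
          apply div_le_div_of_nonneg_left (by linarith) (by linarith) hR
      _ = 1/2 := by rw [div_eq_div_iff (by linarith) (by norm_num)]; ring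
  have ht1 : 0 < 1 + t := by
    have h := abs_le.mp ht_half
    linarith [h.1]
  have hab_pos : 0 < a + b := by
    have h := abs_le.mp hb2R
    have : 2*R - 2*M ≤ b := by linarith [h.1, hu]
    linarith
  have habK : ‖((R:ℂ) + z) - ((R:ℂ) + w)‖ = a := by
    rw [ha_def]; congr 1; ring
  have hbK : ‖((R:ℂ) + z) - (-(starRingEnd ℂ) ((R:ℂ) + w))‖ = b := by
    rw [hb_def]; congr 1
    rw [map_add, Complex.conj_ofReal]
    push_cast
    ring
  have h1pt : 1 + t = (a + b) / (2*R) := by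
    rw [ht_def]; field_simp; ring
  have hKR : KR R z w = -(2*R) * Real.log (1 + t) := by
    rw [KR, K, habK, hbK, h1pt]
    rw [Real.log_div (ne_of_gt hab_pos) (ne_of_gt (by linarith : (0:ℝ) < 2*R)),
      Real.log_div (by norm_num : (2:ℝ) ≠ 0) (ne_of_gt hab_pos),
      Real.log_mul (by norm_num : (2:ℝ) ≠ 0) (ne_of_gt hR0)]
    ring
  have hKinf : Kinf z w = -(u.re + a) := by
    rw [Kinf, ha_def, hu_def]
    congr 2
    simp [Complex.sub_re, Complex.add_re, Complex.neg_re]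
  have hdiff : KR R z w - Kinf z w = -(2*R) * (Real.log (1 + t) - t) - e := by
    rw [hKR, hKinf]
    have h2Rt : 2*R*t = a + u.re + e := by
      rw [ht_def, habe]; field_simp
    linear_combination -h2Rt
  rw [hdiff]
  have hlog := log_one_add_sub_le ht_half
  calc |-(2*R) * (Real.log (1 + t) - t) - e|
      ≤ |(-(2*R)) * (Real.log (1 + t) - t)| + |e| := abs_sub _ _
    _ = 2*R * |Real.log (1 + t) - t| + |e| := by
        rw [abs_mul, abs_neg, abs_of_pos (by linarith : (0:ℝ) < 2*R)]
    _ ≤ 2*R * (2 * t^2) + (‖u‖)^2 / R := by gcongr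
    _ ≤ 2*R * (2 * (N/R)^2) + (2*M)^2 / R := by
        have h := abs_le.mp ht_bound
        have h1 : t^2 ≤ (N/R)^2 := sq_le_sq' h.1 h.2
        have h2 : (‖u‖)^2 ≤ (2*M)^2 := by nlinarith [norm_nonneg u]
        have h3 : (‖u‖)^2 / R ≤ (2*M)^2 / R := by gcongr
        have h4 := mul_le_mul_of_nonneg_left h1 (by linarith : (0:ℝ) ≤ 4*R)
        linarith
    _ = (4*N^2 + 4*M^2) / R := by field_simp; ring
end
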